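/- Let M be a matroid on ground set E, let B₁, B₂ be bases of M, and let 𝒫₁ be a partition of B₁. Then there exists a partition 𝒫₂ of B₂ and a bijection φ: 𝒫₁ → 𝒫₂ such that for each X ∈ 𝒫₁, the set (B₂ ∖ φ(X)) ∪ X is a basis of M. -/

import Mathlib

namespace GreeneAux
open Set Matroid

variable {α : Type} {M : Matroid α} {I J X Y V W S C₁ C₂ : Set α}

noncomputable def rk (M : Matroid α) (X : Set α) : ℕ := (M.exists_isBasis' X).choose.ncard

lemma rk_eq_of_basis' (h : M.IsBasis' I X) : rk M X = I.ncard := by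
  rw [rk, Set.ncard, Set.ncard, (M.exists_isBasis' X).choose_spec.encard_eq_encard h]

lemma rk_indep (h : M.Indep I) : rk M I = I.ncard :=
  rk_eq_of_basis' h.isBasis_self.isBasis'

lemma indep_finite [M.Finite] (h : M.Indep I) : I.Finite :=
  M.set_finite I h.subset_ground

lemma ncard_le_rk [M.Finite] (h : M.Indep I) (hIX : I ⊆ X) : I.ncard ≤ rk M X := by
  obtain ⟨J, hJ, hIJ⟩ := h.subset_isBasis'_of_subset hIX
  rw [rk_eq_of_basis' hJ]
  exact ncard_le_ncard hIJ (indep_finite hJ.indep)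

lemma rk_mono [M.Finite] (hXY : X ⊆ Y) : rk M X ≤ rk M Y := by
  obtain ⟨I, hI⟩ := M.exists_isBasis' X
  rw [rk_eq_of_basis' hI]
  exact ncard_le_rk hI.indep (hI.subset.trans hXY)

lemma rk_le_ncard (hX : X.Finite) : rk M X ≤ X.ncard := by
  obtain ⟨I, hI⟩ := M.exists_isBasis' X
  rw [rk_eq_of_basis' hI]
  exact ncard_le_ncard hI.subset hX

lemma basis'_of_rk_eq [M.Finite] (h : M.Indep I) (hIX : I ⊆ X) (hrk : rk M X = I.ncard) :
    M.IsBasis' I X := by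
  obtain ⟨J, hJ, hIJ⟩ := h.subset_isBasis'_of_subset hIX
  have hJI : J = I := by
    refine (Set.eq_of_subset_of_ncard_le hIJ ?_ (indep_finite hJ.indep)).symm
    rw [rk_eq_of_basis' hJ] at hrk; omega
  rwa [← hJI]

lemma indep_of_rk_eq_ncard [M.Finite] (hX : X ⊆ M.E) (hrk : rk M X = X.ncard) : M.Indep X := by
  obtain ⟨I, hI⟩ := M.exists_isBasis' X
  have : I = X := Set.eq_of_subset_of_ncard_le hI.subset
    (by rw [rk_eq_of_basis' hI] at hrk; omega) (M.set_finite X hX)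
  subst this; exact hI.indep

lemma rk_insert_le [M.Finite] (e : α) (X : Set α) : rk M (insert e X) ≤ rk M X + 1 := by
  obtain ⟨I, hI⟩ := M.exists_isBasis' X
  obtain ⟨J, hJ, hIJ⟩ := hI.indep.subset_isBasis'_of_subset (hI.subset.trans (subset_insert e X))
  have hJX : J ⊆ insert e I := by
    intro x hxJ
    by_contra hx
    simp only [mem_insert_iff, not_or] at hx
    have hxX : x ∈ X := by
      have := hJ.subset hxJ
      rcases this with h | h
      · exact absurd h hx.1
      · exact h
    have : insert x I ⊆ J := insert_subset hxJ hIJ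
    have hII : I = insert x I := hI.eq_of_subset_indep (hJ.indep.subset this)
      (subset_insert x I) (insert_subset hxX hI.subset)
    exact hx.2 (hII ▸ mem_insert x I)
  calc rk M (insert e X) = J.ncard := rk_eq_of_basis' hJ
    _ ≤ (insert e I).ncard := ncard_le_ncard hJX ((indep_finite hI.indep).insert e)
    _ ≤ I.ncard + 1 := ncard_insert_le e I
    _ = rk M X + 1 := by rw [rk_eq_of_basis' hI]

lemma rk_submod [M.Finite] (X Y : Set α) :
    rk M (X ∪ Y) + rk M (X ∩ Y) ≤ rk M X + rk M Y := by
  obtain ⟨I, hI⟩ := M.exists_isBasis' (X ∩ Y)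
  obtain ⟨J, hJ, hIJ⟩ := hI.indep.subset_isBasis'_of_subset
    (hI.subset.trans (inter_subset_left.trans subset_union_left))
  have hJfin : J.Finite := indep_finite hJ.indep
  have h1 : (J ∩ X).ncard + (J ∩ Y).ncard = (J ∩ (X ∪ Y)).ncard + (J ∩ (X ∩ Y)).ncard := by
    rw [← ncard_union_add_ncard_inter (J ∩ X) (J ∩ Y) (hJfin.inter_of_left X)
      (hJfin.inter_of_left Y), ← inter_union_distrib_left, ← inter_inter_distrib_left]
  have h2 : J ∩ (X ∪ Y) = J := inter_eq_self_of_subset_left hJ.subset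
  have h2' : (J ∩ (X ∪ Y)).ncard = J.ncard := by rw [h2]
  have h3 : I ⊆ J ∩ (X ∩ Y) := subset_inter hIJ hI.subset
  have h4 : (J ∩ X).ncard ≤ rk M X := ncard_le_rk (hJ.indep.subset inter_subset_left)
    inter_subset_right
  have h5 : (J ∩ Y).ncard ≤ rk M Y := ncard_le_rk (hJ.indep.subset inter_subset_left)
    inter_subset_right
  have h6 : I.ncard ≤ (J ∩ (X ∩ Y)).ncard := ncard_le_ncard h3 (hJfin.inter_of_left _)
  rw [rk_eq_of_basis' hJ, rk_eq_of_basis' hI] at *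
  omega


lemma rk_closure (M : Matroid α) (X : Set α) : rk M (M.closure X) = rk M X := by
  obtain ⟨I, hI⟩ := M.exists_isBasis' X
  rw [rk_eq_of_basis' hI, rk_eq_of_basis' hI.isBasis_closure_right.isBasis']

lemma rk_union_congr (M : Matroid α) (hcl : M.closure V = M.closure W) (U : Set α) :
    rk M (U ∪ V) = rk M (U ∪ W) := by
  rw [← rk_closure M (U ∪ V), ← rk_closure M (U ∪ W),
    ← closure_union_closure_right_eq M U V, hcl, closure_union_closure_right_eq]

lemma rk_insert_eq_of_mem_union [M.Finite] (hVW : V ⊆ W)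
    (h : rk M V = rk M W) (U : Set α) : rk M (U ∪ V) = rk M (U ∪ W) := by
  obtain ⟨I, hI⟩ := M.exists_isBasis' V
  have hIW : M.IsBasis' I W := basis'_of_rk_eq hI.indep (hI.subset.trans hVW)
    (by rw [← h, rk_eq_of_basis' hI])
  exact rk_union_congr M (hI.closure_eq_closure.symm.trans hIW.closure_eq_closure) U



def GoodPart (M : Matroid α) (S C₁ C₂ : Set α) : Prop :=
  ∃ I₁ I₂, I₁ ∪ I₂ = S ∧ Disjoint I₁ I₂ ∧ M.Indep (I₁ ∪ C₁) ∧ M.Indep (I₂ ∪ C₂)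

def Hyp (M : Matroid α) (S C₁ C₂ : Set α) : Prop :=
  ∀ T ⊆ S, T.ncard + C₁.ncard + C₂.ncard ≤ rk M (T ∪ C₁) + rk M (T ∪ C₂)

lemma goodpart_comm (h : GoodPart M S C₁ C₂) : GoodPart M S C₂ C₁ := by
  obtain ⟨I₁, I₂, hu, hd, h1, h2⟩ := h
  exact ⟨I₂, I₁, by rwa [union_comm], hd.symm, h2, h1⟩

lemma hyp_comm (h : Hyp M S C₁ C₂) : Hyp M S C₂ C₁ := by
  intro T hT; have := h T hT; omega

lemma assign_one [M.Finite]
    (IH : ∀ S₀ C₁₀ C₂₀ : Set α, S₀.ncard < S.ncard → S₀ ⊆ M.E → M.Indep C₁₀ → M.Indep C₂₀ →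
      Disjoint S₀ C₁₀ → Disjoint S₀ C₂₀ → Hyp M S₀ C₁₀ C₂₀ → GoodPart M S₀ C₁₀ C₂₀)
    (hSE : S ⊆ M.E) (hC₁ : M.Indep C₁) (hC₂ : M.Indep C₂)
    (hd₁ : Disjoint S C₁) (hd₂ : Disjoint S C₂) (hyp : Hyp M S C₁ C₂)
    (hnt : ∀ T ⊆ S, T.Nonempty → T ≠ S →
      T.ncard + C₁.ncard + C₂.ncard + 1 ≤ rk M (T ∪ C₁) + rk M (T ∪ C₂))
    {e : α} (he : e ∈ S) (hq1 : M.Indep (insert e C₁))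
    (hgood : rk M ((S \ {e}) ∪ C₂) = rk M (S ∪ C₂) ∨
      S.ncard + C₁.ncard + C₂.ncard + 1 ≤ rk M (S ∪ C₁) + rk M (S ∪ C₂)) :
    GoodPart M S C₁ C₂ := by
  have hSfin : S.Finite := M.set_finite S hSE
  have heS' : e ∉ S \ {e} := by simp
  have hins : insert e (S \ {e}) = S := by
    rw [insert_diff_singleton, insert_eq_of_mem he]
  have hS'fin : (S \ {e}).Finite := hSfin.subset diff_subset
  have hC₁fin : C₁.Finite := indep_finite hC₁
  have heC₁ : e ∉ C₁ := disjoint_left.mp hd₁ he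
  have hc1 : (insert e C₁).ncard = C₁.ncard + 1 := ncard_insert_of_notMem heC₁ hC₁fin
  have hScard : S.ncard = (S \ {e}).ncard + 1 := by
    have h0 := ncard_insert_of_notMem heS' hS'fin
    rw [hins] at h0; omega
  have hcard' : (S \ {e}).ncard < S.ncard := by omega
  have hyp' : Hyp M (S \ {e}) (insert e C₁) C₂ := by
    intro T hT
    have hTS : insert e T ⊆ S := insert_subset he (hT.trans diff_subset)
    have heT : e ∉ T := fun h => heS' (hT h)
    have hTfin : T.Finite := hS'fin.subset hT
    have hcT : (insert e T).ncard = T.ncard + 1 := ncard_insert_of_notMem heT hTfin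
    have e1 : insert e T ∪ C₁ = T ∪ insert e C₁ := by rw [insert_union, union_insert]
    have e2 : insert e T ∪ C₂ = insert e (T ∪ C₂) := insert_union
    have hrk2le : rk M (insert e (T ∪ C₂)) ≤ rk M (T ∪ C₂) + 1 := rk_insert_le e _
    have hrk2ge : rk M (T ∪ C₂) ≤ rk M (insert e (T ∪ C₂)) := rk_mono (subset_insert _ _)
    by_cases hflat : rk M (insert e (T ∪ C₂)) = rk M (T ∪ C₂)
    · have h3 := hyp (insert e T) hTS
      rw [e1, e2, hflat, hcT] at h3
      omega
    · by_cases hTS' : T = S \ {e}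
      · have hS2 : insert e (T ∪ C₂) = S ∪ C₂ := by
          rw [← insert_union, hTS', hins]
        have hS1 : S ∪ C₁ = T ∪ insert e C₁ := by
          rw [← hins, hTS', insert_union, union_insert]
        rcases hgood with hg | hg
        · exact absurd (by rw [hS2, hTS']; exact hg.symm) hflat
        · rw [hS1, ← hS2] at hg
          have hcT' : S.ncard = T.ncard + 1 := by rw [hTS'] at hcT ⊢; omega
          omega
      · have hTneS : insert e T ≠ S := by
          intro h
          have h2 : insert e T \ {e} = T := insert_diff_self_of_notMem heT
          rw [h] at h2
          exact hTS' h2.symm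
        have h3 := hnt (insert e T) hTS (insert_nonempty e T) hTneS
        rw [e1, e2, hcT] at h3
        omega
  obtain ⟨K₁, K₂, hKu, hKd, hK1, hK2⟩ := IH (S \ {e}) (insert e C₁) C₂ hcard'
    (diff_subset.trans hSE) hq1 hC₂
    (by rw [← singleton_union]
        exact disjoint_union_right.mpr ⟨disjoint_singleton_right.mpr heS',
          hd₁.mono_left diff_subset⟩)
    (hd₂.mono_left diff_subset) hyp'
  refine ⟨insert e K₁, K₂, ?_, ?_, ?_, hK2⟩
  · rw [insert_union, hKu, hins]
  · rw [← singleton_union]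
    refine disjoint_union_left.mpr ⟨disjoint_singleton_left.mpr fun h => heS' ?_, hKd⟩
    rw [← hKu]; exact mem_union_right K₁ h
  · have h4 : insert e K₁ ∪ C₁ = K₁ ∪ insert e C₁ := by rw [insert_union, union_insert]
    rw [h4]; exact hK1

lemma partition_lemma_aux [M.Finite] (n : ℕ) :
    ∀ S C₁ C₂ : Set α, S.ncard = n → S ⊆ M.E → M.Indep C₁ → M.Indep C₂ →
      Disjoint S C₁ → Disjoint S C₂ → Hyp M S C₁ C₂ → GoodPart M S C₁ C₂ := by
  induction n using Nat.strong_induction_on with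
  | _ n IH =>
  intro S C₁ C₂ hn hSE hC₁ hC₂ hd₁ hd₂ hyp
  have hSfin : S.Finite := M.set_finite S hSE
  have IH' : ∀ S₀ C₁₀ C₂₀ : Set α, S₀.ncard < S.ncard → S₀ ⊆ M.E → M.Indep C₁₀ →
      M.Indep C₂₀ → Disjoint S₀ C₁₀ → Disjoint S₀ C₂₀ → Hyp M S₀ C₁₀ C₂₀ →
      GoodPart M S₀ C₁₀ C₂₀ :=
    fun S₀ C₁₀ C₂₀ hlt hse hc1 hc2 hdd1 hdd2 hh =>
      IH S₀.ncard (hn ▸ hlt) S₀ C₁₀ C₂₀ rfl hse hc1 hc2 hdd1 hdd2 hh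
  rcases S.eq_empty_or_nonempty with rfl | ⟨e, he⟩
  · exact ⟨∅, ∅, by simp, by simp, by simpa using hC₁, by simpa using hC₂⟩
  by_cases htight : ∃ T, T ⊆ S ∧ T.Nonempty ∧ T ≠ S ∧
      rk M (T ∪ C₁) + rk M (T ∪ C₂) = T.ncard + C₁.ncard + C₂.ncard
  · -- Case 2 : a proper nonempty tight set exists
    obtain ⟨T, hTS, hTne, hTneS, htt⟩ := htight
    have hTfin : T.Finite := hSfin.subset hTS
    have hTlt : T.ncard < n := hn ▸ ncard_lt_ncard (ssubset_of_subset_of_ne hTS hTneS) hSfin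
    obtain ⟨J₁, J₂, hJu, hJd, hJ1, hJ2⟩ := IH T.ncard hTlt T C₁ C₂ rfl (hTS.trans hSE) hC₁ hC₂
      (hd₁.mono_left hTS) (hd₂.mono_left hTS) (fun U hU => hyp U (hU.trans hTS))
    have hJ1T : J₁ ⊆ T := hJu ▸ subset_union_left
    have hJ2T : J₂ ⊆ T := hJu ▸ subset_union_right
    have hJ1fin : J₁.Finite := hTfin.subset hJ1T
    have hJ2fin : J₂.Finite := hTfin.subset hJ2T
    have hC₁fin : C₁.Finite := indep_finite hC₁
    have hC₂fin : C₂.Finite := indep_finite hC₂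
    have hu1 : (J₁ ∪ C₁).ncard = J₁.ncard + C₁.ncard :=
      ncard_union_eq (hd₁.mono_left (hJ1T.trans hTS)) hJ1fin hC₁fin
    have hu2 : (J₂ ∪ C₂).ncard = J₂.ncard + C₂.ncard :=
      ncard_union_eq (hd₂.mono_left (hJ2T.trans hTS)) hJ2fin hC₂fin
    have hT12 : J₁.ncard + J₂.ncard = T.ncard := by
      rw [← ncard_union_eq hJd hJ1fin hJ2fin, hJu]
    have hle1 : (J₁ ∪ C₁).ncard ≤ rk M (T ∪ C₁) :=
      ncard_le_rk hJ1 (union_subset_union_left C₁ hJ1T)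
    have hle2 : (J₂ ∪ C₂).ncard ≤ rk M (T ∪ C₂) :=
      ncard_le_rk hJ2 (union_subset_union_left C₂ hJ2T)
    have hrk1 : rk M (T ∪ C₁) = (J₁ ∪ C₁).ncard := by omega
    have hrk2 : rk M (T ∪ C₂) = (J₂ ∪ C₂).ncard := by omega
    have hb1 := basis'_of_rk_eq hJ1 (union_subset_union_left C₁ hJ1T) hrk1
    have hb2 := basis'_of_rk_eq hJ2 (union_subset_union_left C₂ hJ2T) hrk2
    have hSTlt : (S \ T).ncard < S.ncard := by
      rw [ncard_diff hTS hTfin]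
      have h0 : 0 < T.ncard := (ncard_pos hTfin).mpr hTne
      have h1 : T.ncard ≤ S.ncard := ncard_le_ncard hTS hSfin
      omega
    have hyp₂ : Hyp M (S \ T) (J₁ ∪ C₁) (J₂ ∪ C₂) := by
      intro U hU
      have hUS : U ∪ T ⊆ S := union_subset (hU.trans diff_subset) hTS
      have hUT : Disjoint U T := disjoint_sdiff_left.mono_left hU
      have hUfin : U.Finite := hSfin.subset (hU.trans diff_subset)
      have hUTcard : (U ∪ T).ncard = U.ncard + T.ncard := ncard_union_eq hUT hUfin hTfin
      have hr1 : rk M (U ∪ (J₁ ∪ C₁)) = rk M ((U ∪ T) ∪ C₁) := by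
        rw [rk_union_congr M hb1.closure_eq_closure U, union_assoc]
      have hr2 : rk M (U ∪ (J₂ ∪ C₂)) = rk M ((U ∪ T) ∪ C₂) := by
        rw [rk_union_congr M hb2.closure_eq_closure U, union_assoc]
      have h5 := hyp (U ∪ T) hUS
      rw [hr1, hr2, hu1, hu2]
      omega
    obtain ⟨K₁, K₂, hKu, hKd, hK1, hK2⟩ := IH' (S \ T) (J₁ ∪ C₁) (J₂ ∪ C₂) hSTlt
      (diff_subset.trans hSE) hJ1 hJ2
      (disjoint_union_right.mpr ⟨disjoint_sdiff_left.mono_right hJ1T,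
        hd₁.mono_left diff_subset⟩)
      (disjoint_union_right.mpr ⟨disjoint_sdiff_left.mono_right hJ2T,
        hd₂.mono_left diff_subset⟩)
      hyp₂
    have hK1S : K₁ ⊆ S \ T := hKu ▸ subset_union_left
    have hK2S : K₂ ⊆ S \ T := hKu ▸ subset_union_right
    refine ⟨J₁ ∪ K₁, J₂ ∪ K₂, ?_, ?_, ?_, ?_⟩
    · rw [union_union_union_comm, hJu, hKu, union_diff_cancel hTS]
    · refine disjoint_union_left.mpr ⟨?_, ?_⟩ <;> refine disjoint_union_right.mpr ⟨?_, ?_⟩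
      · exact hJd
      · exact disjoint_sdiff_right.mono hJ1T hK2S
      · exact disjoint_sdiff_left.mono hK1S hJ2T
      · exact hKd
    · have h6 : J₁ ∪ K₁ ∪ C₁ = K₁ ∪ (J₁ ∪ C₁) := by
        rw [union_comm J₁ K₁, union_assoc]
      rw [h6]; exact hK1
    · have h6 : J₂ ∪ K₂ ∪ C₂ = K₂ ∪ (J₂ ∪ C₂) := by
        rw [union_comm J₂ K₂, union_assoc]
      rw [h6]; exact hK2
  · -- Case 1 : no proper nonempty tight set
    push_neg at htight
    have hnt : ∀ T ⊆ S, T.Nonempty → T ≠ S →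
        T.ncard + C₁.ncard + C₂.ncard + 1 ≤ rk M (T ∪ C₁) + rk M (T ∪ C₂) := by
      intro T hTS h1 h2
      have h3 := hyp T hTS
      have h4 := htight T hTS h1 h2
      omega
    have hins : insert e (S \ {e}) = S := by
      rw [insert_diff_singleton, insert_eq_of_mem he]
    have heE : e ∈ M.E := hSE he
    have heC₁ : e ∉ C₁ := disjoint_left.mp hd₁ he
    have heC₂ : e ∉ C₂ := disjoint_left.mp hd₂ he
    have hnotq : ∀ C : Set α, M.Indep C → e ∉ C → ¬ M.Indep (insert e C) →
        rk M (insert e C) = C.ncard := by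
      intro C hC heC hni
      have h1 : rk M (insert e C) ≤ C.ncard + 1 := by
        have h0 := rk_insert_le (M := M) e C; rw [rk_indep hC] at h0; exact h0
      have h2 : C.ncard ≤ rk M (insert e C) := by
        have h0 := rk_mono (M := M) (subset_insert e C); rw [rk_indep hC] at h0; exact h0
      by_contra h3
      have h4 : rk M (insert e C) = (insert e C).ncard := by
        rw [ncard_insert_of_notMem heC (indep_finite hC)]; omega
      exact hni (indep_of_rk_eq_ncard (insert_subset heE hC.subset_ground) h4)
    have hq : M.Indep (insert e C₁) ∨ M.Indep (insert e C₂) := by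
      by_contra h
      push_neg at h
      have h1 := hnotq C₁ hC₁ heC₁ h.1
      have h2 := hnotq C₂ hC₂ heC₂ h.2
      have h3 := hyp {e} (singleton_subset_iff.mpr he)
      rw [singleton_union, singleton_union, h1, h2, ncard_singleton] at h3
      omega
    have hnotqP : ∀ C : Set α, M.Indep C → e ∉ C → ¬ M.Indep (insert e C) →
        rk M ((S \ {e}) ∪ C) = rk M (S ∪ C) := by
      intro C hC heC hni
      have h1 := hnotq C hC heC hni
      rw [← rk_indep hC] at h1
      have h2 := rk_insert_eq_of_mem_union (subset_insert e C) h1.symm (S \ {e})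
      rw [union_insert, ← insert_union, hins] at h2
      exact h2
    by_cases hq1 : M.Indep (insert e C₁)
    · by_cases hp2 : rk M ((S \ {e}) ∪ C₂) = rk M (S ∪ C₂)
      · exact assign_one IH' hSE hC₁ hC₂ hd₁ hd₂ hyp hnt he hq1 (Or.inl hp2)
      · by_cases hp1 : rk M ((S \ {e}) ∪ C₁) = rk M (S ∪ C₁)
        · have hq2 : M.Indep (insert e C₂) := by
            by_contra h; exact hp2 (hnotqP C₂ hC₂ heC₂ h)
          exact goodpart_comm (assign_one IH' hSE hC₂ hC₁ hd₂ hd₁ (hyp_comm hyp)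
            (fun T hT h1 h2 => by have := hnt T hT h1 h2; omega) he hq2 (Or.inl hp1))
        · have hsand : ∀ C : Set α, rk M ((S \ {e}) ∪ C) ≤ rk M (S ∪ C) ∧
              rk M (S ∪ C) ≤ rk M ((S \ {e}) ∪ C) + 1 := by
            intro C
            refine ⟨rk_mono (union_subset_union_left C diff_subset), ?_⟩
            have h1 : S ∪ C = insert e ((S \ {e}) ∪ C) := by rw [← insert_union, hins]
            rw [h1]; exact rk_insert_le e _
          have s1 := hsand C₁
          have s2 := hsand C₂
          have hS' := hyp (S \ {e}) diff_subset
          have hScard : S.ncard = (S \ {e}).ncard + 1 := by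
            have h0 := ncard_insert_of_notMem (show e ∉ S \ {e} by simp)
              (hSfin.subset diff_subset)
            rw [hins] at h0; omega
          have strict : S.ncard + C₁.ncard + C₂.ncard + 1 ≤
              rk M (S ∪ C₁) + rk M (S ∪ C₂) := by omega
          exact assign_one IH' hSE hC₁ hC₂ hd₁ hd₂ hyp hnt he hq1 (Or.inr strict)
    · have hq2 : M.Indep (insert e C₂) := hq.resolve_left hq1
      have hp1 : rk M ((S \ {e}) ∪ C₁) = rk M (S ∪ C₁) := hnotqP C₁ hC₁ heC₁ hq1
      exact goodpart_comm (assign_one IH' hSE hC₂ hC₁ hd₂ hd₁ (hyp_comm hyp)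
        (fun T hT h1 h2 => by have := hnt T hT h1 h2; omega) he hq2 (Or.inl hp1))

lemma rk_ground_base (hB : M.IsBase B₀) : rk M M.E = B₀.ncard :=
  rk_eq_of_basis' hB.isBasis_ground.isBasis'

lemma base_of_indep_card [M.Finite] {I : Set α} (h : M.Indep I) (hc : rk M M.E ≤ I.ncard) :
    M.IsBase I := by
  obtain ⟨B', hB', hIB'⟩ := h.exists_isBase_superset
  have : I = B' := Set.eq_of_subset_of_ncard_le hIB'
    (by rw [← rk_ground_base hB']; exact hc) (indep_finite hB'.indep)
  rwa [this]

/-- Multiple symmetric exchange property. -/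
lemma mse [M.Finite] {A B X : Set α} (hA : M.IsBase A) (hB : M.IsBase B) (hX : X ⊆ A) :
    ∃ Y ⊆ B, Disjoint Y (A \ X) ∧ M.IsBase ((A \ X) ∪ Y) ∧ M.IsBase ((B \ Y) ∪ X) := by
  have hAE : A ⊆ M.E := hA.subset_ground
  have hBE : B ⊆ M.E := hB.subset_ground
  have hAfin : A.Finite := M.set_finite A hAE
  have hBfin : B.Finite := M.set_finite B hBE
  set C₁ : Set α := (A \ X) ∪ (X ∩ B) with hC₁def
  set C₂ : Set α := X ∪ ((A \ X) ∩ B) with hC₂def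
  set S : Set α := B \ A with hSdef
  have hC₁A : C₁ ⊆ A := union_subset diff_subset (inter_subset_left.trans hX)
  have hC₂A : C₂ ⊆ A := union_subset hX (inter_subset_left.trans diff_subset)
  have hC₁ : M.Indep C₁ := hA.indep.subset hC₁A
  have hC₂ : M.Indep C₂ := hA.indep.subset hC₂A
  have hcup : C₁ ∪ C₂ = A := by
    ext x
    have h0 := @hX x
    simp only [hC₁def, hC₂def, mem_union, mem_inter_iff, mem_diff]
    tauto
  have hcap : C₁ ∩ C₂ = A ∩ B := by
    ext x
    have h0 := @hX x
    simp only [hC₁def, hC₂def, mem_union, mem_inter_iff, mem_diff]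
    tauto
  -- cardinalities
  have hc1card : C₁.ncard = (A \ X).ncard + (X ∩ B).ncard :=
    ncard_union_eq (disjoint_sdiff_left.mono_right inter_subset_left)
      (hAfin.subset diff_subset) (hAfin.subset (inter_subset_left.trans hX))
  have hc2card : C₂.ncard = X.ncard + ((A \ X) ∩ B).ncard :=
    ncard_union_eq ((disjoint_sdiff_left.mono_left inter_subset_left).symm)
      (hAfin.subset hX) (hAfin.subset (inter_subset_left.trans diff_subset))
  have hAX : (A \ X).ncard + X.ncard = A.ncard := by
    rw [← ncard_union_eq disjoint_sdiff_left (hAfin.subset diff_subset) (hAfin.subset hX),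
      diff_union_of_subset hX]
  have hABcapset : (X ∩ B) ∪ ((A \ X) ∩ B) = A ∩ B := by
    rw [← union_inter_distrib_right, union_comm, diff_union_of_subset hX]
  have hABcap : (X ∩ B).ncard + ((A \ X) ∩ B).ncard = (A ∩ B).ncard := by
    rw [← hABcapset, ncard_union_eq
      (disjoint_sdiff_right.mono inter_subset_left inter_subset_left)
      (hBfin.subset inter_subset_right) (hBfin.subset inter_subset_right)]
  have hrA : rk M M.E = A.ncard := rk_ground_base hA
  have hrB : rk M M.E = B.ncard := rk_ground_base hB
  have hyp : Hyp M S C₁ C₂ := by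
    intro T hT
    have hTB : T ⊆ B := hT.trans diff_subset
    have hsub := rk_submod (M := M) (T ∪ C₁) (T ∪ C₂)
    have e1 : (T ∪ C₁) ∪ (T ∪ C₂) = T ∪ A := by
      rw [union_union_union_comm, union_self, hcup]
    have e2 : (T ∪ C₁) ∩ (T ∪ C₂) = T ∪ (A ∩ B) := by
      rw [← union_inter_distrib_left, hcap]
    have hrTA : rk M (T ∪ A) = rk M M.E := by
      refine le_antisymm (rk_mono (union_subset (hTB.trans hBE) hAE)) ?_
      have h0 := rk_mono (M := M) (subset_union_right (s := T) (t := A))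
      rw [rk_indep hA.indep] at h0
      rw [hrA]
      exact h0
    have hTABind : M.Indep (T ∪ (A ∩ B)) :=
      hB.indep.subset (union_subset hTB inter_subset_right)
    have hTdisj : Disjoint T (A ∩ B) := disjoint_sdiff_left.mono hT inter_subset_left
    have hrTAB : rk M (T ∪ (A ∩ B)) = T.ncard + (A ∩ B).ncard := by
      rw [rk_indep hTABind, ncard_union_eq hTdisj (hBfin.subset hTB)
        (hBfin.subset inter_subset_right)]
    rw [e1, e2, hrTA, hrTAB] at hsub
    omega
  obtain ⟨I₁, I₂, hIu, hId, hK1, hK2⟩ := partition_lemma_aux S.ncard S C₁ C₂ rfl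
    (diff_subset.trans hBE) hC₁ hC₂ (disjoint_sdiff_left.mono_right hC₁A)
    (disjoint_sdiff_left.mono_right hC₂A) hyp
  have hI1S : I₁ ⊆ B \ A := by
    rw [hSdef] at hIu; rw [← hIu]; exact subset_union_left
  have hI2S : I₂ ⊆ B \ A := by
    rw [hSdef] at hIu; rw [← hIu]; exact subset_union_right
  have hI1fin : I₁.Finite := hBfin.subset (hI1S.trans diff_subset)
  have hI2fin : I₂.Finite := hBfin.subset (hI2S.trans diff_subset)
  have hC₁fin : C₁.Finite := hAfin.subset hC₁A
  have hC₂fin : C₂.Finite := hAfin.subset hC₂A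
  have hd1 : Disjoint I₁ C₁ := disjoint_sdiff_left.mono hI1S hC₁A
  have hd2 : Disjoint I₂ C₂ := disjoint_sdiff_left.mono hI2S hC₂A
  have hn1 : (I₁ ∪ C₁).ncard = I₁.ncard + C₁.ncard := ncard_union_eq hd1 hI1fin hC₁fin
  have hn2 : (I₂ ∪ C₂).ncard = I₂.ncard + C₂.ncard := ncard_union_eq hd2 hI2fin hC₂fin
  have hle1 : (I₁ ∪ C₁).ncard ≤ rk M M.E := ncard_le_rk hK1 hK1.subset_ground
  have hle2 : (I₂ ∪ C₂).ncard ≤ rk M M.E := ncard_le_rk hK2 hK2.subset_ground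
  have hsum12 : I₁.ncard + I₂.ncard = (B \ A).ncard := by
    rw [← ncard_union_eq hId hI1fin hI2fin, hIu]
  have hBA : (B \ A).ncard + (A ∩ B).ncard = B.ncard := by
    have h0 := ncard_inter_add_ncard_diff_eq_ncard B A hBfin
    rw [inter_comm]
    omega
  have hbase1 : M.IsBase (I₁ ∪ C₁) := base_of_indep_card hK1 (by omega)
  have hbase2 : M.IsBase (I₂ ∪ C₂) := base_of_indep_card hK2 (by omega)
  refine ⟨I₁ ∪ (X ∩ B), union_subset (hI1S.trans diff_subset) inter_subset_right,
    ?_, ?_, ?_⟩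
  · exact disjoint_union_left.mpr ⟨disjoint_sdiff_left.mono hI1S diff_subset,
      disjoint_sdiff_right.mono_left inter_subset_left⟩
  · have h7 : (A \ X) ∪ (I₁ ∪ (X ∩ B)) = I₁ ∪ C₁ := union_left_comm _ _ _
    rwa [h7]
  · have hBsplit : B \ (I₁ ∪ (X ∩ B)) = I₂ ∪ ((A \ X) ∩ B) := by
      ext x
      have h1 : (x ∈ I₁ ∨ x ∈ I₂) ↔ (x ∈ B ∧ x ∉ A) := by
        rw [← mem_union, hIu, hSdef, mem_diff]
      have h2 := @hX x
      have h3 : x ∈ I₁ → x ∉ I₂ := fun a b => (disjoint_left.mp hId a) b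
      simp only [mem_diff, mem_union, mem_inter_iff]
      tauto
    have h8 : (B \ (I₁ ∪ (X ∩ B))) ∪ X = I₂ ∪ C₂ := by
      rw [hBsplit, union_assoc, union_comm ((A \ X) ∩ B) X]
    rwa [h8]

lemma greene_aux [M.Finite] (n : ℕ) :
    ∀ (P₁ : Set (Set α)) (A B C : Set α), P₁.ncard = n → Disjoint A C → Disjoint B C →
      M.IsBase (A ∪ C) → M.IsBase (B ∪ C) → (∀ X ∈ P₁, X.Nonempty) → P₁.Pairwise Disjoint →
      ⋃₀ P₁ = A →
      ∃ P₂ : Set (Set α), (∀ Y ∈ P₂, Y.Nonempty) ∧ P₂.Pairwise Disjoint ∧ ⋃₀ P₂ = B ∧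
        ∃ φ : Set α → Set α, Set.BijOn φ P₁ P₂ ∧
          ∀ X ∈ P₁, M.IsBase ((B \ φ X) ∪ X ∪ C) := by
  induction n using Nat.strong_induction_on with
  | _ n IH =>
  intro P₁ A B C hn hAC hBC hbA hbB hne hpw hcov
  classical
  have hAE : A ⊆ M.E := subset_union_left.trans hbA.subset_ground
  have hAfin : A.Finite := M.set_finite A hAE
  have hblA : ∀ X ∈ P₁, X ⊆ A := fun X hX => hcov ▸ subset_sUnion_of_mem hX
  have hP₁fin : P₁.Finite := hAfin.finite_subsets.subset (fun X hX => hblA X hX)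
  rcases eq_or_ne n 0 with rfl | hn0
  · -- base case : P₁ = ∅
    have hP₁ : P₁ = ∅ := (ncard_eq_zero hP₁fin).mp hn
    subst hP₁
    have hA : A = ∅ := by rw [← hcov, sUnion_empty]
    subst hA
    rw [empty_union] at hbA
    have hBC' : C = B ∪ C := hbA.eq_of_subset_isBase hbB subset_union_right
    have hB : B = ∅ := by
      have h1 : B ⊆ C := by rw [hBC']; exact subset_union_left
      exact disjoint_self.mp (hBC.mono_right h1)
    subst hB
    exact ⟨∅, by simp, by simp, by simp, id, bijOn_empty id, by simp⟩
  · obtain ⟨X, hXP⟩ : P₁.Nonempty := by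
      rw [← ncard_pos hP₁fin] at *; omega
    have hXA : X ⊆ A := hblA X hXP
    have hXC : Disjoint X C := hAC.mono_left hXA
    obtain ⟨Y, hYBC, hYd, hbase1, hbase2⟩ := mse hbA hbB (hXA.trans subset_union_left)
    have hCsub : C ⊆ (A ∪ C) \ X := by
      intro x hx
      exact ⟨mem_union_right A hx, fun hxX => (disjoint_right.mp hXC hx) hxX⟩
    have hYC : Disjoint Y C := hYd.mono_right hCsub
    have hYB : Y ⊆ B := by
      intro y hy
      rcases hYBC hy with h | h
      · exact h
      · exact absurd h (disjoint_left.mp hYC hy)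
    have hYne : Y.Nonempty := by
      rcases Y.eq_empty_or_nonempty with rfl | h
      · exfalso
        rw [union_empty] at hbase1
        have heq := hbase1.eq_of_subset_isBase hbA diff_subset
        obtain ⟨x, hx⟩ := hne X hXP
        have hxAC : x ∈ A ∪ C := mem_union_left C (hXA hx)
        rw [← heq] at hxAC
        exact hxAC.2 hx
      · exact h
    -- rewrite base1 and base2 with C split out
    have hACX : (A ∪ C) \ X = (A \ X) ∪ C := by
      ext x
      have h1 : x ∈ X → x ∉ C := fun hh => disjoint_left.mp hXC hh
      simp only [mem_diff, mem_union]
      tauto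
    have hBCY : (B ∪ C) \ Y = (B \ Y) ∪ C := by
      ext x
      have h1 : x ∈ Y → x ∉ C := fun hh => disjoint_left.mp hYC hh
      simp only [mem_diff, mem_union]
      tauto
    -- new instance
    have hA'C' : Disjoint (A \ X) (C ∪ Y) :=
      disjoint_union_right.mpr ⟨hAC.mono_left diff_subset,
        (hYd.mono_right (subset_diff.mpr ⟨diff_subset.trans subset_union_left,
          disjoint_sdiff_left⟩)).symm⟩
    have hB'C' : Disjoint (B \ Y) (C ∪ Y) :=
      disjoint_union_right.mpr ⟨hBC.mono_left diff_subset, disjoint_sdiff_left⟩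
    have hbA' : M.IsBase ((A \ X) ∪ (C ∪ Y)) := by
      have h2 : (A \ X) ∪ (C ∪ Y) = ((A ∪ C) \ X) ∪ Y := by
        rw [hACX, union_assoc]
      rwa [h2]
    have hbB' : M.IsBase ((B \ Y) ∪ (C ∪ Y)) := by
      have h2 : (B \ Y) ∪ (C ∪ Y) = B ∪ C := by
        ext x
        have h1 : x ∈ Y → x ∈ B := fun h => hYB h
        simp only [mem_diff, mem_union]
        tauto
      rwa [h2]
    have hcov' : ⋃₀ (P₁ \ {X}) = A \ X := by
      apply subset_antisymm
      · apply sUnion_subset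
        intro Z hZ
        have hZX : Disjoint Z X := hpw hZ.1 hXP hZ.2
        exact subset_diff.mpr ⟨hblA Z hZ.1, hZX⟩
      · intro a ha
        have ha1 : a ∈ ⋃₀ P₁ := by rw [hcov]; exact ha.1
        obtain ⟨Z, hZP, hZa⟩ := ha1
        refine mem_sUnion.mpr ⟨Z, ⟨hZP, ?_⟩, hZa⟩
        intro hZeq
        rw [mem_singleton_iff] at hZeq
        exact ha.2 (hZeq ▸ hZa)
    have hcard' : (P₁ \ {X}).ncard < n := by
      rw [← hn]
      exact ncard_diff_singleton_lt_of_mem hXP hP₁fin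
    obtain ⟨P₂', hne₂', hpw₂', hcov₂', φ', hbij', hbase'⟩ :=
      IH (P₁ \ {X}).ncard hcard' (P₁ \ {X}) (A \ X) (B \ Y) (C ∪ Y) rfl hA'C' hB'C'
        hbA' hbB' (fun Z hZ => hne Z hZ.1) (hpw.mono diff_subset) hcov'
    have hblB' : ∀ Z ∈ P₂', Z ⊆ B \ Y := fun Z hZ => hcov₂' ▸ subset_sUnion_of_mem hZ
    have hYnotP₂' : Y ∉ P₂' := by
      intro h
      have h1 : Y ⊆ B \ Y := hblB' Y h
      obtain ⟨y, hy⟩ := hYne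
      exact (h1 hy).2 hy
    refine ⟨insert Y P₂', ?_, ?_, ?_, fun Z => if Z = X then Y else φ' Z, ?_, ?_⟩
    · intro Z hZ
      rw [mem_insert_iff] at hZ
      rcases hZ with rfl | hZ
      · exact hYne
      · exact hne₂' Z hZ
    · rw [pairwise_insert]
      refine ⟨hpw₂', fun Z hZ _ => ?_⟩
      have h1 : Disjoint Y Z := (disjoint_sdiff_left.mono_left (hblB' Z hZ)).symm
      exact ⟨h1, h1.symm⟩
    · rw [sUnion_insert, hcov₂', union_diff_cancel hYB]
    · constructor
      · -- MapsTo
        intro Z hZ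
        by_cases hZX : Z = X
        · simp [hZX]
        · simp only [hZX, if_neg, mem_insert_iff]
          exact Or.inr (hbij'.mapsTo ⟨hZ, hZX⟩)
      constructor
      · -- InjOn
        intro Z hZ W hW h
        simp only at h
        by_cases hZX : Z = X <;> by_cases hWX : W = X
        · rw [hZX, hWX]
        · rw [if_pos hZX, if_neg hWX] at h
          exact absurd (h ▸ hbij'.mapsTo ⟨hW, hWX⟩) hYnotP₂'
        · rw [if_neg hZX, if_pos hWX] at h
          exact absurd (h ▸ hbij'.mapsTo ⟨hZ, hZX⟩) hYnotP₂'
        · rw [if_neg hZX, if_neg hWX] at h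
          exact hbij'.injOn ⟨hZ, hZX⟩ ⟨hW, hWX⟩ h
      · -- SurjOn
        intro Z hZ
        rw [mem_insert_iff] at hZ
        rcases hZ with rfl | hZ
        · exact ⟨X, hXP, if_pos rfl⟩
        · obtain ⟨W, hW, hWZ⟩ := hbij'.surjOn hZ
          have hW2 : W ≠ X := by simpa using hW.2
          exact ⟨W, hW.1, by simp only; rw [if_neg hW2]; exact hWZ⟩
    · intro Z hZ
      simp only
      by_cases hZX : Z = X
      · subst hZX
        rw [if_pos rfl]
        have h2 : (B \ Y) ∪ Z ∪ C = ((B ∪ C) \ Y) ∪ Z := by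
          rw [hBCY, union_right_comm]
        rwa [h2]
      · rw [if_neg hZX]
        have hb := hbase' Z ⟨hZ, hZX⟩
        have hφ'Z : φ' Z ⊆ B \ Y := hblB' (φ' Z) (hbij'.mapsTo ⟨hZ, hZX⟩)
        have h2 : ((B \ Y) \ φ' Z) ∪ Z ∪ (C ∪ Y) = (B \ φ' Z) ∪ Z ∪ C := by
          ext x
          have h3 : x ∈ Y → x ∈ B := fun h => hYB h
          have h4 : x ∈ Y → x ∉ φ' Z := fun h h5 => (hφ'Z h5).2 h
          simp only [mem_diff, mem_union]
          tauto
        rwa [h2] at hb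

end GreeneAux






/-- Greene's block exchange property: For bases `B₁, B₂` of a finite matroid
`M` and a partition `P₁` of `B₁`, there is a partition `P₂` of `B₂` and a bijection
`φ : P₁ → P₂` such that `(B₂ \ φ X) ∪ X` is a basis for every block `X ∈ P₁`. -/
theorem stmt8 {α : Type} (M : Matroid α) (hfin : M.Finite)
    (B₁ B₂ : Set α) (h1 : M.IsBase B₁) (h2 : M.IsBase B₂)
    (P₁ : Set (Set α)) (hne₁ : ∀ X ∈ P₁, X.Nonempty)
    (hdisj₁ : P₁.Pairwise Disjoint) (hcov₁ : ⋃₀ P₁ = B₁) :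
    ∃ P₂ : Set (Set α), (∀ Y ∈ P₂, Y.Nonempty) ∧ P₂.Pairwise Disjoint ∧ ⋃₀ P₂ = B₂ ∧
      ∃ φ : Set α → Set α, Set.BijOn φ P₁ P₂ ∧
        ∀ X ∈ P₁, M.IsBase ((B₂ \ φ X) ∪ X) := by
  haveI := hfin
  obtain ⟨P₂, hA, hB, hC, φ, hD, hE⟩ := GreeneAux.greene_aux P₁.ncard P₁ B₁ B₂ ∅ rfl
    (Set.disjoint_empty _) (Set.disjoint_empty _)
    (by rwa [Set.union_empty]) (by rwa [Set.union_empty]) hne₁ hdisj₁ hcov₁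
  refine ⟨P₂, hA, hB, hC, φ, hD, fun X hX => ?_⟩
  have := hE X hX
  rwa [Set.union_empty] at this
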